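/- Fix n ∈ ℕ, let G = (ℤ/2)^n, let ε : F2[G] → F2 be the augmentation ring homomorphism sending each group element to 1 (i.e., taking the sum of coefficients), and let 𝓘 = ker ε be the augmentation ideal. For A ⊆ {1,…,n} let ξ_A = Σ_{g ∈ G_A} g, where G_A is the subgroup generated by {x_i : i ∈ A}. Then for every m ≥ 1, the m-th power 𝓘^m of the augmentation ideal equals the F2-linear span of { ξ_A : |A| ≥ m }. -/

import Mathlib

/-- The group `G = (ℤ/2)ⁿ`, written multiplicatively. -/
abbrev GrpG (n : ℕ) : Type := Multiplicative (Fin n → ZMod 2)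

/-- The `i`-th generator `x_i` of `G = (ℤ/2)ⁿ`. -/
def xgen {n : ℕ} (i : Fin n) : GrpG n := Multiplicative.ofAdd (Pi.single i 1)

/-- The subgroup `G_A ≤ G` generated by `{x_i : i ∈ A}`. -/
def GA {n : ℕ} (A : Finset (Fin n)) : Subgroup (GrpG n) :=
  Subgroup.closure (xgen '' (A : Set (Fin n)))

open scoped Classical in
/-- The element `ξ_A = ∑_{g ∈ G_A} g` of the group algebra `F2[G]`. -/
noncomputable def xiA {n : ℕ} (A : Finset (Fin n)) : MonoidAlgebra (ZMod 2) (GrpG n) :=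
  ∑ g ∈ ((GA A : Set (GrpG n)).toFinset), MonoidAlgebra.of (ZMod 2) (GrpG n) g

/-- The augmentation homomorphism `ε : F2[G] → F2` sending every group element to `1`. -/
noncomputable def aug (n : ℕ) : MonoidAlgebra (ZMod 2) (GrpG n) →ₐ[ZMod 2] ZMod 2 :=
  MonoidAlgebra.lift (ZMod 2) (ZMod 2) (GrpG n) 1

/-- The augmentation ideal `𝓘 = ker ε` of the group algebra `F2[(ℤ/2)ⁿ]`. -/
noncomputable def augIdeal (n : ℕ) : Ideal (MonoidAlgebra (ZMod 2) (GrpG n)) :=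
  RingHom.ker (aug n)

noncomputable section Aux
namespace Stmt13Aux
open MonoidAlgebra Finset

variable {n : ℕ}

abbrev R (n : ℕ) := MonoidAlgebra (ZMod 2) (GrpG n)

abbrev oG {n : ℕ} (g : GrpG n) : R n := MonoidAlgebra.of (ZMod 2) (GrpG n) g

lemma zmod2_cases (x : ZMod 2) : x = 0 ∨ x = 1 := by revert x; decide

/-- The group element `∏_{i∈T} x_i`. -/
def mT (T : Finset (Fin n)) : GrpG n := Multiplicative.ofAdd (∑ i ∈ T, Pi.single i 1)

lemma toAdd_mT (T : Finset (Fin n)) (j : Fin n) :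
    Multiplicative.toAdd (mT T) j = if j ∈ T then 1 else 0 := by
  simp only [mT, toAdd_ofAdd, Finset.sum_apply, Pi.single_apply]
  rw [Finset.sum_ite_eq T j (fun _ => 1)]

lemma mT_injective : Function.Injective (mT (n := n)) := by
  intro T T' h
  ext j
  have h2 : (if j ∈ T then (1 : ZMod 2) else 0) = (if j ∈ T' then 1 else 0) := by
    rw [← toAdd_mT, ← toAdd_mT, h]
  by_cases hT : j ∈ T <;> by_cases hT' : j ∈ T' <;>
    simp only [hT, hT', if_true, if_false] at h2 ⊢
  · exact absurd h2 (by decide)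
  · exact absurd h2 (by decide)

lemma mT_eq_prod (T : Finset (Fin n)) : mT T = ∏ i ∈ T, xgen i := by
  rw [mT, ofAdd_sum]; rfl

lemma mT_mem_GA {A T : Finset (Fin n)} (hT : T ⊆ A) : mT T ∈ GA A := by
  rw [mT_eq_prod]
  exact Subgroup.prod_mem _ fun i hi =>
    Subgroup.subset_closure ⟨i, by simpa using hT hi, rfl⟩

lemma mT_filter {A : Finset (Fin n)} (g : GrpG n)
    (h0 : ∀ j, j ∉ A → Multiplicative.toAdd g j = 0) :
    mT (A.filter fun j => Multiplicative.toAdd g j = 1) = g := by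
  apply Multiplicative.toAdd.injective
  ext j
  rw [toAdd_mT]
  by_cases hA : j ∈ A
  · rcases zmod2_cases (Multiplicative.toAdd g j) with h | h <;>
      simp [Finset.mem_filter, hA, h]
  · simp [Finset.mem_filter, hA, h0 j hA]

/-- Support subgroup. -/
def K (A : Finset (Fin n)) : Subgroup (GrpG n) where
  carrier := {g | ∀ j, j ∉ A → Multiplicative.toAdd g j = 0}
  one_mem' := by intro j _; simp
  mul_mem' := by
    intro a b ha hb j hj
    have h1 := ha j hj
    have h2 := hb j hj
    show Multiplicative.toAdd (a * b) j = 0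
    rw [toAdd_mul, Pi.add_apply, h1, h2, add_zero]
  inv_mem' := by
    intro a ha j hj
    have h1 := ha j hj
    show Multiplicative.toAdd a⁻¹ j = 0
    rw [toAdd_inv, Pi.neg_apply, h1, neg_zero]

lemma mem_GA_iff {A : Finset (Fin n)} {g : GrpG n} :
    g ∈ GA A ↔ ∃ T ∈ A.powerset, mT T = g := by
  constructor
  · intro hg
    have hK : g ∈ K A := by
      refine (Subgroup.closure_le (K A)).2 ?_ hg
      rintro _ ⟨i, hi, rfl⟩ j hj
      have hij : j ≠ i := by rintro rfl; exact hj (by simpa using hi)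
      show Multiplicative.toAdd (xgen i) j = 0
      simp [xgen, Pi.single_apply, hij]
    exact ⟨A.filter fun j => Multiplicative.toAdd g j = 1,
      Finset.mem_powerset.2 (Finset.filter_subset _ _), mT_filter g hK⟩
  · rintro ⟨T, hT, rfl⟩
    exact mT_mem_GA (Finset.mem_powerset.1 hT)

open scoped Classical in
lemma GA_toFinset (A : Finset (Fin n)) :
    ((GA A : Set (GrpG n)).toFinset) = A.powerset.image mT := by
  ext g
  simp only [Set.mem_toFinset, SetLike.mem_coe, mem_GA_iff, Finset.mem_image]

lemma xiA_eq_sum (A : Finset (Fin n)) :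
    xiA A = ∑ T ∈ A.powerset, oG (mT T) := by
  classical
  rw [xiA]
  rw [show ((GA A : Set (GrpG n)).toFinset) = A.powerset.image mT from GA_toFinset A]
  rw [Finset.sum_image (fun x _ y _ h => mT_injective h)]

lemma xiA_eq_prod (A : Finset (Fin n)) :
    xiA A = ∏ i ∈ A, (oG (xgen i) + 1) := by
  classical
  rw [Finset.prod_add, xiA_eq_sum]
  refine Finset.sum_congr rfl fun T hT => ?_
  rw [Finset.prod_const_one, mul_one, ← map_prod, ← mT_eq_prod]

lemma two_zero : (2 : R n) = 0 := by
  have h : (algebraMap (ZMod 2) (R n)) 2 = (2 : R n) := map_ofNat _ 2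
  rw [← h, show (2 : ZMod 2) = 0 from rfl, map_zero]

lemma add_self (a : R n) : a + a = 0 := by
  rw [← two_mul, two_zero, zero_mul]

lemma xgen_sq (i : Fin n) : xgen i * xgen i = 1 := by
  show Multiplicative.ofAdd _ * Multiplicative.ofAdd _ = 1
  rw [← ofAdd_add, ← Pi.single_add, show (1 : ZMod 2) + 1 = 0 by decide, Pi.single_zero]
  rfl

lemma sq_zero (i : Fin n) : (oG (xgen i) + 1) * (oG (xgen i) + 1) = 0 := by
  have hx : oG (xgen i) * oG (xgen i) = 1 := by
    rw [← map_mul, xgen_sq, map_one]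
  have : (oG (xgen i) + 1) * (oG (xgen i) + 1)
      = (oG (xgen i) * oG (xgen i) + 1) + (oG (xgen i) + oG (xgen i)) := by ring
  rw [this, hx, add_self, add_self, add_zero]

lemma xiA_mul_disjoint {A B : Finset (Fin n)} (h : Disjoint A B) :
    xiA A * xiA B = xiA (A ∪ B) := by
  classical
  rw [xiA_eq_prod, xiA_eq_prod, xiA_eq_prod, ← Finset.prod_union h]

lemma xiA_mul_not_disjoint {A B : Finset (Fin n)} (h : ¬ Disjoint A B) :
    xiA A * xiA B = 0 := by
  classical
  obtain ⟨i, hiA, hiB⟩ := Finset.not_disjoint_iff.1 h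
  rw [xiA_eq_prod, xiA_eq_prod, ← Finset.mul_prod_erase A _ hiA,
    ← Finset.mul_prod_erase B _ hiB]
  have : (oG (xgen i) + 1) * (∏ x ∈ A.erase i, (oG (xgen x) + 1)) *
      ((oG (xgen i) + 1) * ∏ x ∈ B.erase i, (oG (xgen x) + 1))
      = ((oG (xgen i) + 1) * (oG (xgen i) + 1)) *
        ((∏ x ∈ A.erase i, (oG (xgen x) + 1)) * ∏ x ∈ B.erase i, (oG (xgen x) + 1)) := by
    ring
  rw [this, sq_zero, zero_mul]

lemma aug_of (g : GrpG n) : aug n (oG g) = 1 := by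
  rw [aug, MonoidAlgebra.lift_of]
  rfl

lemma aug_xiA {A : Finset (Fin n)} (hA : A.Nonempty) : aug n (xiA A) = 0 := by
  rw [xiA_eq_sum, map_sum]
  simp only [aug_of]
  rw [Finset.sum_const, Finset.card_powerset, nsmul_eq_mul, mul_one, Nat.cast_pow]
  rw [show ((2 : ℕ) : ZMod 2) = 0 from rfl]
  exact zero_pow (by simpa [Finset.card_eq_zero] using hA.ne_empty)

lemma gen_mem_augIdeal (i : Fin n) : oG (xgen i) + 1 ∈ augIdeal n := by
  rw [augIdeal, RingHom.mem_ker]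
  show aug n (oG (xgen i) + 1) = 0
  rw [map_add, aug_of, map_one]
  rfl

/-- The span of the `ξ_A` with `m ≤ |A|`. -/
def V (n m : ℕ) : Submodule (ZMod 2) (R n) :=
  Submodule.span (ZMod 2)
    {a : MonoidAlgebra (ZMod 2) (GrpG n) | ∃ A : Finset (Fin n), m ≤ A.card ∧ xiA A = a}

lemma xiA_mem_V {m : ℕ} {A : Finset (Fin n)} (hA : m ≤ A.card) : xiA A ∈ V n m :=
  Submodule.subset_span ⟨A, hA, rfl⟩

lemma of_mT_mem_V0 (T : Finset (Fin n)) : oG (mT T) ∈ V n 0 := by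
  induction T using Finset.strongInductionOn with
  | _ T ih =>
    have hx : xiA T ∈ V n 0 := xiA_mem_V (Nat.zero_le _)
    have hmem : T ∈ T.powerset := Finset.mem_powerset_self T
    have hsum : oG (mT T) = xiA T - ∑ U ∈ T.powerset.erase T, oG (mT U) := by
      rw [xiA_eq_sum, ← Finset.add_sum_erase _ _ hmem]
      ring
    rw [hsum]
    refine sub_mem hx (Submodule.sum_mem _ fun U hU => ?_)
    have hU' : U ⊂ T := by
      rcases Finset.mem_erase.1 hU with ⟨hne, hUp⟩
      exact Finset.ssubset_iff_subset_ne.2 ⟨Finset.mem_powerset.1 hUp, hne⟩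
    exact ih U hU'

lemma V0_eq_top : V n 0 = ⊤ := by
  refine top_le_iff.1 fun a _ => ?_
  classical
  have ha : a = ∑ g ∈ a.coeff.support, a.coeff g • oG g := by
    conv_lhs => rw [← MonoidAlgebra.sum_coeff_single a]
    rw [Finsupp.sum]
    refine Finset.sum_congr rfl fun g _ => ?_
    rw [show oG g = MonoidAlgebra.single g (1 : ZMod 2) from rfl,
      MonoidAlgebra.smul_single', mul_one]
  rw [ha]
  refine Submodule.sum_mem _ fun g _ => Submodule.smul_mem _ _ ?_
  obtain ⟨T, rfl⟩ : ∃ T, mT T = g :=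
    ⟨Finset.univ.filter fun j => Multiplicative.toAdd g j = 1,
      mT_filter g fun j hj => absurd (Finset.mem_univ j) hj⟩
  exact of_mT_mem_V0 T

lemma xiA_empty : xiA (∅ : Finset (Fin n)) = 1 := by
  rw [xiA_eq_sum]
  simp only [Finset.powerset_empty, Finset.sum_singleton]
  have h1 : mT (∅ : Finset (Fin n)) = 1 := by rw [mT]; simp
  rw [h1]
  exact map_one (MonoidAlgebra.of (ZMod 2) (GrpG n))

lemma V1_le_ker : V n 1 ≤ Submodule.restrictScalars (ZMod 2)
    (RingHom.ker (aug n : MonoidAlgebra (ZMod 2) (GrpG n) →+* ZMod 2)) := by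
  rw [V, Submodule.span_le]
  rintro a ⟨A, hA, rfl⟩
  simp only [SetLike.mem_coe, Submodule.restrictScalars_mem, RingHom.mem_ker]
  exact aug_xiA (Finset.card_pos.1 hA)

lemma augIdeal_le_V1 : ∀ a ∈ augIdeal n, a ∈ V n 1 := by
  intro a ha
  have h0 : a ∈ V n 0 := V0_eq_top (n := n) ▸ Submodule.mem_top
  have hins : a ∈ Submodule.span (ZMod 2)
      (insert (1 : R n)
        {x : R n | ∃ A : Finset (Fin n), 1 ≤ A.card ∧ xiA A = x}) := by
    refine Submodule.span_mono ?_ h0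
    rintro x ⟨A, _, rfl⟩
    rcases Finset.eq_empty_or_nonempty A with rfl | hA
    · exact Set.mem_insert_iff.2 (Or.inl (xiA_empty))
    · exact Set.mem_insert_iff.2 (Or.inr ⟨A, Finset.card_pos.2 hA, rfl⟩)
  rcases Submodule.mem_span_insert.1 hins with ⟨c, z, hz, rfl⟩
  have hz' : aug n z = 0 := V1_le_ker hz
  have haug : aug n (c • 1 + z) = c := by
    rw [map_add, hz', add_zero, map_smul, map_one, smul_eq_mul, mul_one]
  have hc : c = 0 := by
    rw [← haug]
    exact ha
  rw [hc, zero_smul, zero_add]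
  exact hz

lemma mul_V {k : ℕ} : ∀ a ∈ V n k, ∀ b ∈ V n 1, a * b ∈ V n (k + 1) := by
  intro a ha
  induction ha using Submodule.span_induction with
  | mem x hx =>
    obtain ⟨A, hA, rfl⟩ := hx
    intro b hb
    induction hb using Submodule.span_induction with
    | mem y hy =>
      obtain ⟨B, hB, rfl⟩ := hy
      by_cases hd : Disjoint A B
      · rw [xiA_mul_disjoint hd]
        refine xiA_mem_V ?_
        rw [Finset.card_union_of_disjoint hd]
        omega
      · rw [xiA_mul_not_disjoint hd]
        exact Submodule.zero_mem _
    | zero => rw [mul_zero]; exact Submodule.zero_mem _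
    | add y z _ _ hy hz => rw [mul_add]; exact Submodule.add_mem _ hy hz
    | smul c y _ hy => rw [mul_smul_comm]; exact Submodule.smul_mem _ _ hy
  | zero => intro b _; rw [zero_mul]; exact Submodule.zero_mem _
  | add x y _ _ hx hy =>
    intro b hb
    rw [add_mul]
    exact Submodule.add_mem _ (hx b hb) (hy b hb)
  | smul c x _ hx =>
    intro b hb
    rw [smul_mul_assoc]
    exact Submodule.smul_mem _ _ (hx b hb)

lemma pow_le : ∀ m, 1 ≤ m → ∀ x ∈ augIdeal n ^ m, x ∈ V n m := by
  intro m
  induction m with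
  | zero => omega
  | succ k ih =>
    intro _ x hx
    rcases Nat.eq_zero_or_pos k with rfl | hk
    · rw [pow_one] at hx
      exact augIdeal_le_V1 x hx
    · rw [pow_succ] at hx
      refine Submodule.mul_induction_on hx ?_ ?_
      · intro a ha b hb
        exact mul_V a (ih hk a ha) b (augIdeal_le_V1 b hb)
      · intro x y hx hy
        exact Submodule.add_mem _ hx hy

lemma prod_mem_pow : ∀ m (A : Finset (Fin n)), m ≤ A.card →
    (∏ i ∈ A, (oG (xgen i) + 1)) ∈ augIdeal n ^ m := by
  intro m
  induction m with
  | zero =>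
    intro A _
    rw [pow_zero, Ideal.one_eq_top]
    exact Submodule.mem_top
  | succ k ih =>
    intro A hA
    have hne : A.Nonempty := Finset.card_pos.1 (by omega)
    obtain ⟨i, hi⟩ := hne
    rw [← Finset.mul_prod_erase A _ hi, pow_succ,
      mul_comm (oG (xgen i) + 1) (∏ x ∈ A.erase i, (oG (xgen x) + 1))]
    refine Ideal.mul_mem_mul (ih _ ?_) (gen_mem_augIdeal i)
    rw [Finset.card_erase_of_mem hi]
    omega

end Stmt13Aux
end Aux

/-- For every `m ≥ 1`, the `m`-th power of the augmentation ideal of `F2[(ℤ/2)ⁿ]`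
equals the `F2`-linear span of `{ ξ_A : |A| ≥ m }`. -/
theorem stmt13 {n : ℕ} (m : ℕ) (hm : 1 ≤ m) :
    Submodule.restrictScalars (ZMod 2) (augIdeal n ^ m) =
      Submodule.span (ZMod 2)
        {a : MonoidAlgebra (ZMod 2) (GrpG n) |
          ∃ A : Finset (Fin n), m ≤ A.card ∧ xiA A = a} := by
  apply le_antisymm
  · intro x hx
    exact Stmt13Aux.pow_le m hm x (Submodule.restrictScalars_mem _ _ _ |>.1 hx)
  · rw [Submodule.span_le]
    rintro a ⟨A, hA, rfl⟩
    simp only [SetLike.mem_coe, Submodule.restrictScalars_mem]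
    rw [Stmt13Aux.xiA_eq_prod]
    exact Stmt13Aux.prod_mem_pow m A hA
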